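/- Let a, b be nonzero integers with a/b = p/q in lowest terms, and let γ(t) = (at, bt). If p or q is even, then ∫₀¹ sgn(cos(2π a t)·cos(2π b t)) dt = 0. -/

import Mathlib

open MeasureTheory Real Set

/-- The cosine sign correlation: the normalized measure of the set of `x ∈ [0, 2π]`
where all `cos (aᵢ x)` are positive or all are negative. -/
noncomputable def cosP (n : ℕ) (a : Fin n → ℕ) : ℝ :=
  (volume {x : ℝ | x ∈ Icc 0 (2 * π) ∧
    ((∀ i, 0 < Real.cos (a i * x)) ∨ (∀ i, Real.cos (a i * x) < 0))}).toReal / (2 * π)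

lemma measurable_realSign : Measurable Real.sign := by
  unfold Real.sign
  exact Measurable.ite (measurableSet_lt measurable_id measurable_const) measurable_const
    (Measurable.ite (measurableSet_lt measurable_const measurable_id) measurable_const
      measurable_const)

lemma abs_realSign_le (x : ℝ) : |Real.sign x| ≤ 1 := by
  rcases Real.sign_apply_eq x with h | h | h <;> rw [h] <;> norm_num

lemma intervalIntegrable_of_sign (g : ℝ → ℝ) (hg : Measurable g) (t₁ t₂ : ℝ) :
    IntervalIntegrable (fun t => Real.sign (g t)) volume t₁ t₂ := by
  rw [intervalIntegrable_iff]
  refine Integrable.mono' (g := fun _ => (1:ℝ))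
    ((integrableOn_const_iff (C := (1:ℝ))).mpr (Or.inr measure_Ioc_lt_top))
    ((measurable_realSign.comp hg).aestronglyMeasurable) (ae_of_all _ fun x => ?_)
  simpa using abs_realSign_le (g x)

theorem stmt_12 (a b p q : ℤ) (ha : a ≠ 0) (hb : b ≠ 0) (hpq : IsCoprime p q)
    (hratio : a * q = b * p) (heven : Even p ∨ Even q) :
    ∫ t in (0:ℝ)..1,
      Real.sign (Real.cos (2 * π * a * t) * Real.cos (2 * π * b * t)) = 0 := by
  -- p ≠ 0
  have hp0 : p ≠ 0 := by
    rintro rfl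
    have hq0 : q = 0 := by
      have : a * q = 0 := by simpa using hratio
      rcases mul_eq_zero.mp this with h | h
      · exact absurd h ha
      · exact h
    rw [hq0] at hpq
    exact not_isCoprime_zero_zero hpq
  -- get k with a = p * k, b = q * k
  have hpa : p ∣ a := hpq.dvd_of_dvd_mul_right ⟨b, by linarith⟩
  obtain ⟨k, hk⟩ := hpa
  have hbk : b = q * k := by
    have h1 : b * p = p * (q * k) := by rw [← hratio, hk]; ring
    have := mul_left_cancel₀ hp0 (by linarith : p * b = p * (q * k))
    linarith
  have hk0 : k ≠ 0 := by rintro rfl; simp at hk; exact ha hk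
  have hkr : (k : ℝ) ≠ 0 := Int.cast_ne_zero.mpr hk0
  -- p + q is odd
  have hnboth : ¬ (Even p ∧ Even q) := by
    rintro ⟨⟨u, hu⟩, ⟨v, hv⟩⟩
    have h2p : (2 : ℤ) ∣ p := ⟨u, by linarith⟩
    have h2q : (2 : ℤ) ∣ q := ⟨v, by linarith⟩
    have := hpq.isUnit_of_dvd' h2p h2q
    rw [Int.isUnit_iff] at this
    omega
  have hodd : Odd (p + q) := by
    rw [Int.odd_add]
    rcases heven with hp | hq
    · have hq' : ¬ Even q := fun h => hnboth ⟨hp, h⟩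
      constructor
      · intro h; exact absurd (Int.not_even_iff_odd.mpr h) (fun _ => Int.not_even_iff_odd.mpr h hp)
      · intro h; exact absurd h hq'
    · constructor
      · intro _; exact hq
      · intro hq2
        have hp' : ¬ Even p := fun h => hnboth ⟨h, hq2⟩
        exact Int.not_even_iff_odd.mp hp'
  set f : ℝ → ℝ := fun t => Real.sign (Real.cos (2 * π * a * t) * Real.cos (2 * π * b * t))
    with hf
  set c : ℝ := 1 / (2 * k) with hc
  -- antiperiodicity
  have hanti : Function.Antiperiodic f c := by
    intro t
    have hac : 2 * π * (a : ℝ) * (t + c) = 2 * π * a * t + p * π := by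
      rw [hc, hk]; push_cast; field_simp
    have hbc : 2 * π * (b : ℝ) * (t + c) = 2 * π * b * t + q * π := by
      rw [hc, hbk]; push_cast; field_simp
    simp only [hf]
    rw [hac, hbc, Real.cos_add_int_mul_pi, Real.cos_add_int_mul_pi]
    have : (-1 : ℝ) ^ p * Real.cos (2 * π * a * t) * ((-1 : ℝ) ^ q * Real.cos (2 * π * b * t))
        = (-1 : ℝ) ^ (p + q) * (Real.cos (2 * π * a * t) * Real.cos (2 * π * b * t)) := by
      rw [zpow_add₀ (by norm_num : (-1 : ℝ) ≠ 0)]; ring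
    rw [this, hodd.neg_one_zpow, neg_one_mul, Real.sign_neg]
  have hper : Function.Periodic f (1 / k) := by
    have := hanti.periodic
    have h2c : 2 • c = 1 / (k : ℝ) := by
      rw [nsmul_eq_mul, hc]; push_cast; field_simp
    rwa [h2c] at this
  -- integrability
  have hmeas : Measurable fun t : ℝ => Real.cos (2 * π * a * t) * Real.cos (2 * π * b * t) := by
    fun_prop
  have hint : ∀ t₁ t₂ : ℝ, IntervalIntegrable f volume t₁ t₂ := fun t₁ t₂ =>
    intervalIntegrable_of_sign _ hmeas t₁ t₂
  -- integral over one period is zero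
  have hone : (∫ x in (0:ℝ)..(1 / k), f x) = 0 := by
    have hsplit : (∫ x in (0:ℝ)..(1 / k), f x)
        = (∫ x in (0:ℝ)..c, f x) + ∫ x in c..(1 / k), f x :=
      (intervalIntegral.integral_add_adjacent_intervals (hint 0 c) (hint c (1 / k))).symm
    have hcc : c + c = 1 / (k : ℝ) := by rw [hc]; field_simp; norm_num
    have h2 : (∫ x in c..(1 / k), f x) = ∫ x in (0:ℝ)..c, f (x + c) := by
      rw [intervalIntegral.integral_comp_add_right, zero_add, hcc]
    have h3 : (∫ x in (0:ℝ)..c, f (x + c)) = - ∫ x in (0:ℝ)..c, f x := by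
      rw [← intervalIntegral.integral_neg]
      exact intervalIntegral.integral_congr fun x _ => hanti x
    rw [hsplit, h2, h3]; ring
  -- assemble
  have hzs : (∫ x in (0:ℝ)..(0 + k • (1 / (k:ℝ))), f x) = k • ∫ x in (0:ℝ)..(0 + 1 / k), f x :=
    hper.intervalIntegral_add_zsmul_eq k 0 hint
  have hks : (0 : ℝ) + k • (1 / (k:ℝ)) = 1 := by
    rw [zsmul_eq_mul]; field_simp; norm_num
  rw [hks] at hzs
  calc (∫ t in (0:ℝ)..1, f t) = k • ∫ x in (0:ℝ)..(0 + 1 / k), f x := hzs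
    _ = 0 := by rw [zero_add, hone, smul_zero]
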